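/- Let α > −1 and n ∈ ℕ, and suppose L_{n+1}^{(α+1)} and L_n^{(α)} have no common zeros. Let 0 < z_1 < ⋯ < z_{n+1} be the zeros of L_{n+1}^{(α+1)}, 0 < x_1 < ⋯ < x_n the zeros of L_n^{(α)}, and 0 < y_1 < ⋯ < y_{n+1} the zeros of L_{n+1}^{(α)}. If the point n+1 lies in the open interval (z_j, z_{j+1}) for some j ∈ {1, …, n}, then the smallest zeros satisfy 0 < y_1 < x_1 < z_1 < y_2. -/

import Mathlib

open Polynomial Finset

noncomputable def laguerre (α : ℝ) (n : ℕ) : Polynomial ℝ :=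
  ∑ k ∈ Finset.range (n + 1),
    Polynomial.C ((-1 : ℝ) ^ k * (∏ j ∈ Finset.Icc (k + 1) n, (α + (j : ℝ))) /
      ((n - k).factorial * k.factorial)) * Polynomial.X ^ k

lemma laguerre_coeff (α : ℝ) (n k : ℕ) :
    (laguerre α n).coeff k = if k ≤ n then
      (-1 : ℝ) ^ k * (∏ j ∈ Finset.Icc (k + 1) n, (α + (j : ℝ))) /
      ((n - k).factorial * k.factorial) else 0 := by
  unfold laguerre
  rw [Polynomial.finset_sum_coeff]
  simp only [Polynomial.coeff_C_mul, Polynomial.coeff_X_pow, mul_ite, mul_one, mul_zero]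
  simp only [eq_comm (a := k)]
  rw [Finset.sum_ite_eq' (Finset.range (n+1)) k]
  simp [Nat.lt_succ_iff]

lemma prod_shift (α : ℝ) (a b : ℕ) :
    ∏ j ∈ Finset.Icc a b, (α + 1 + (j:ℝ)) = ∏ j ∈ Finset.Icc (a+1) (b+1), (α + (j:ℝ)) := by
  rw [← Finset.map_add_right_Icc a b 1, Finset.prod_map]
  simp only [addRightEmbedding_apply]
  refine Finset.prod_congr rfl fun j hj => by push_cast; ring

lemma prod_bot (α : ℝ) (a b : ℕ) (h : a ≤ b) :
    ∏ j ∈ Finset.Icc a b, (α + (j:ℝ)) = (α + a) * ∏ j ∈ Finset.Icc (a+1) b, (α + (j:ℝ)) := by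
  rw [← Finset.Ico_add_one_right_eq_Icc, ← Finset.Ico_add_one_right_eq_Icc,
    Finset.prod_eq_prod_Ico_succ_bot (by omega : a < b + 1)]

lemma laguerre_identity (α : ℝ) (n : ℕ) :
    X * laguerre (α+1) (n+1) =
      C (α + n + 1) * laguerre α n + (X - C ((n:ℝ)+1)) * laguerre α (n+1) := by
  ext k
  rw [sub_mul, Polynomial.coeff_add, Polynomial.coeff_sub, Polynomial.coeff_C_mul,
    Polynomial.coeff_C_mul]
  match k with
  | 0 =>
    simp only [Polynomial.coeff_X_mul_zero, laguerre_coeff]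
    simp only [Nat.zero_le, if_true, Nat.sub_zero, Nat.factorial_zero, pow_zero]
    rw [Finset.prod_Icc_succ_top (by omega : 1 ≤ n + 1), Nat.factorial_succ]
    push_cast
    field_simp
    ring
  | (k+1) =>
    rw [Polynomial.coeff_X_mul, Polynomial.coeff_X_mul, laguerre_coeff, laguerre_coeff,
      laguerre_coeff, laguerre_coeff]
    rcases Nat.lt_or_ge k n with hk | hk
    · -- main case k+1 ≤ n
      obtain ⟨m, rfl⟩ : ∃ m, n = k + 1 + m := ⟨n - k - 1, by omega⟩
      simp only [show k ≤ k+1+m+1 by omega, show k+1 ≤ k+1+m by omega,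
        show k+1 ≤ k+1+m+1 by omega, if_true]
      rw [show k+1+m+1-k = m+2 from by omega, show k+1+m-(k+1) = m from by omega,
        show k+1+m+1-(k+1) = m+1 from by omega]
      have e1 : ∏ j ∈ Finset.Icc (k+1) (k+1+m+1), (α+1+(j:ℝ)) =
          ((∏ j ∈ Finset.Icc (k+1+1) (k+1+m), (α+(j:ℝ))) * (α+((k+1+m+1 : ℕ) : ℝ)))
            * (α+((k+1+m+1+1 : ℕ) : ℝ)) := by
        rw [prod_shift, Finset.prod_Icc_succ_top (by omega), Finset.prod_Icc_succ_top (by omega)]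
      have e2 : ∏ j ∈ Finset.Icc (k+1) (k+1+m+1), (α+(j:ℝ)) =
          (α+((k+1:ℕ):ℝ)) * ((∏ j ∈ Finset.Icc (k+1+1) (k+1+m), (α+(j:ℝ)))
            * (α+((k+1+m+1 : ℕ) : ℝ))) := by
        rw [prod_bot α (k+1) _ (by omega), Finset.prod_Icc_succ_top (by omega)]
      have e3 : ∏ j ∈ Finset.Icc (k+1+1) (k+1+m+1), (α+(j:ℝ)) =
          (∏ j ∈ Finset.Icc (k+1+1) (k+1+m), (α+(j:ℝ))) * (α+((k+1+m+1 : ℕ) : ℝ)) := by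
        rw [Finset.prod_Icc_succ_top (by omega)]
      rw [e1, e2, e3]
      have f1 : ((m+2).factorial : ℝ) = (m+2) * ((m+1) * m.factorial) := by
        rw [Nat.factorial_succ (m+1), Nat.factorial_succ m]; push_cast; ring
      have f2 : ((m+1).factorial : ℝ) = (m+1) * m.factorial := by
        rw [Nat.factorial_succ m]; push_cast; ring
      have f3 : ((k+1).factorial : ℝ) = (k+1) * k.factorial := by
        rw [Nat.factorial_succ k]; push_cast; ring
      rw [f1, f2, f3]
      have g1 : (m.factorial : ℝ) ≠ 0 := by positivity
      have g2 : (k.factorial : ℝ) ≠ 0 := by positivity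
      push_cast
      field_simp
      ring
    rcases Nat.eq_or_lt_of_le hk with hkn | hk2
    · -- k = n
      subst hkn
      simp only [show n ≤ n+1 by omega, show ¬(n+1 ≤ n) by omega, if_true, if_false,
        show n+1 ≤ n+1 by omega]
      rw [show n+1-n = 1 from by omega, show n+1-(n+1) = 0 from by omega]
      rw [Finset.Icc_self, Finset.prod_singleton, Finset.prod_singleton,
        Finset.Icc_eq_empty (show ¬(n+1+1 ≤ n+1) by omega), Finset.prod_empty]
      have f3 : ((n+1).factorial : ℝ) = (n+1) * n.factorial := by
        rw [Nat.factorial_succ n]; push_cast; ring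
      rw [f3]
      have g2 : (n.factorial : ℝ) ≠ 0 := by positivity
      simp only [Nat.factorial_one, Nat.factorial_zero, Nat.cast_one, mul_one, one_mul]
      push_cast
      field_simp
      ring
    rcases Nat.lt_or_ge k (n+2) with h1 | h1
    · -- k = n+1
      have hk3 : k = n+1 := by omega
      subst hk3
      simp only [show ¬(n+1+1 ≤ n) by omega, show n+1 ≤ n+1 by omega,
        show ¬(n+1+1 ≤ n+1) by omega, if_true, if_false]
      rw [show n+1-(n+1) = 0 from by omega, Finset.Icc_eq_empty (show ¬(n+1+1 ≤ n+1) by omega),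
        Finset.prod_empty]
      ring
    · -- k ≥ n+2
      simp only [show ¬(k ≤ n) by omega, show ¬(k+1 ≤ n) by omega,
        show ¬(k ≤ n+1) by omega, show ¬(k+1 ≤ n+1) by omega, if_false]
      norm_num

lemma laguerre_derivative (α : ℝ) (n : ℕ) :
    derivative (laguerre α (n+1)) = laguerre α (n+1) - laguerre (α+1) (n+1) := by
  ext k
  rw [Polynomial.coeff_derivative, Polynomial.coeff_sub, laguerre_coeff, laguerre_coeff,
    laguerre_coeff]
  rcases Nat.lt_or_ge k (n+1) with hk | hk
  · -- k ≤ n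
    obtain ⟨m, rfl⟩ : ∃ m, n = k + m := ⟨n - k, by omega⟩
    simp only [show k+1 ≤ k+m+1 by omega, show k ≤ k+m+1 by omega, if_true]
    rw [show k+m+1-(k+1) = m from by omega, show k+m+1-k = m+1 from by omega]
    have e2 : ∏ j ∈ Finset.Icc (k+1) (k+m+1), (α+(j:ℝ)) =
        (α+((k+1:ℕ):ℝ)) * ∏ j ∈ Finset.Icc (k+1+1) (k+m+1), (α+(j:ℝ)) :=
      prod_bot α (k+1) _ (by omega)
    have e1 : ∏ j ∈ Finset.Icc (k+1) (k+m+1), (α+1+(j:ℝ)) =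
        (∏ j ∈ Finset.Icc (k+1+1) (k+m+1), (α+(j:ℝ))) * (α+((k+m+1+1:ℕ):ℝ)) := by
      rw [prod_shift, Finset.prod_Icc_succ_top (by omega)]
    rw [e1, e2]
    have f2 : ((m+1).factorial : ℝ) = (m+1) * m.factorial := by
      rw [Nat.factorial_succ m]; push_cast; ring
    have f3 : ((k+1).factorial : ℝ) = (k+1) * k.factorial := by
      rw [Nat.factorial_succ k]; push_cast; ring
    rw [f2, f3]
    have g1 : (m.factorial : ℝ) ≠ 0 := by positivity
    have g2 : (k.factorial : ℝ) ≠ 0 := by positivity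
    push_cast
    field_simp
    ring
  · rcases Nat.eq_or_lt_of_le hk with hkn | hk2
    · -- k = n+1
      subst hkn
      simp only [show ¬(n+1+1 ≤ n+1) by omega, show n+1 ≤ n+1 by omega, if_true, if_false]
      rw [show n+1-(n+1) = 0 from by omega]
      rw [Finset.Icc_eq_empty (show ¬(n+1+1 ≤ n+1) by omega), Finset.prod_empty,
        Finset.prod_empty]
      ring
    · simp only [show ¬(k+1 ≤ n+1) by omega, show ¬(k ≤ n+1) by omega, if_false]
      ring

lemma poly_factor (p : Polynomial ℝ) (m : ℕ) (r : ℕ → ℝ)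
    (htop : p.coeff m ≠ 0)
    (hdeg : ∀ k, m < k → p.coeff k = 0)
    (hinj : ∀ i ∈ Finset.Icc 1 m, ∀ j ∈ Finset.Icc 1 m, r i = r j → i = j)
    (hroots : ∀ i ∈ Finset.Icc 1 m, p.eval (r i) = 0) :
    p = Polynomial.C (p.coeff m) * ∏ i ∈ Finset.Icc 1 m, (X - Polynomial.C (r i)) := by
  set q : Polynomial ℝ := ∏ i ∈ Finset.Icc 1 m, (X - Polynomial.C (r i)) with hq
  have hqmonic : q.Monic := monic_prod_of_monic _ _ fun i _ => monic_X_sub_C (r i)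
  have hqdeg : q.natDegree = m := by
    rw [hq, natDegree_prod _ _ fun i _ => X_sub_C_ne_zero (r i)]
    simp [natDegree_X_sub_C]
  set d : Polynomial ℝ := p - Polynomial.C (p.coeff m) * q with hd
  have hdcoeff : ∀ k, m ≤ k → d.coeff k = 0 := by
    intro k hk
    rcases Nat.eq_or_lt_of_le hk with heq | hk2
    · subst heq
      simp only [hd, Polynomial.coeff_sub, Polynomial.coeff_C_mul]
      have : q.coeff m = 1 := by
        have := hqmonic.leadingCoeff
        rwa [Polynomial.leadingCoeff, hqdeg] at this
      rw [this]; ring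
    · simp only [hd, Polynomial.coeff_sub, Polynomial.coeff_C_mul]
      rw [hdeg k hk2, Polynomial.coeff_eq_zero_of_natDegree_lt (by omega : q.natDegree < k)]
      ring
  have hdz : d = 0 := by
    by_contra hdne
    have hdlt : d.natDegree < m := by
      by_contra hge
      exact hdne (Polynomial.leadingCoeff_eq_zero.mp (hdcoeff _ (by omega)))
    have : d = 0 := by
      apply Polynomial.eq_zero_of_natDegree_lt_card_of_eval_eq_zero d
        (f := fun i : (Finset.Icc 1 m : Finset ℕ) => r i)
        (fun i j hij => Subtype.ext (hinj i i.2 j j.2 hij))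
      · intro i
        simp only [hd, Polynomial.eval_sub, Polynomial.eval_mul, Polynomial.eval_C, hq,
          Polynomial.eval_prod]
        rw [hroots i i.2, Finset.prod_eq_zero i.2 (by simp)]
        ring
      · rwa [Fintype.card_coe, Nat.card_Icc, Nat.add_sub_cancel]
    exact hdne this
  have : p - Polynomial.C (p.coeff m) * q = 0 := hdz
  linear_combination (norm := ring_nf) this

lemma eval_factored (c t : ℝ) (r : ℕ → ℝ) (s : Finset ℕ) :
    Polynomial.eval t (Polynomial.C c * ∏ i ∈ s, (X - Polynomial.C (r i))) =
      c * ∏ i ∈ s, (t - r i) := by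
  simp [Polynomial.eval_prod]

lemma prod_sub_eq (t : ℝ) (r : ℕ → ℝ) (s : Finset ℕ) :
    ∏ i ∈ s, (t - r i) = (-1 : ℝ)^s.card * ∏ i ∈ s, (r i - t) := by
  rw [← Finset.prod_const (b := (-1 : ℝ)), ← Finset.prod_mul_distrib]
  exact Finset.prod_congr rfl fun i _ => by ring

lemma prod_sub_pos (t : ℝ) (r : ℕ → ℝ) (s : Finset ℕ) (h : ∀ i ∈ s, t < r i) :
    0 < ∏ i ∈ s, (r i - t) :=
  Finset.prod_pos fun i hi => by have := h i hi; linarith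


lemma neg_one_sq_pow (m : ℕ) : ((-1:ℝ)^m) * ((-1:ℝ)^m) = 1 := by
  rw [← mul_pow]; norm_num

lemma neg_one_pow_succ_mul (m : ℕ) : ((-1:ℝ)^(m+1)) * ((-1:ℝ)^m) = -1 := by
  rw [← pow_add, show m+1+m = 2*m+1 from by ring, pow_succ, pow_mul]; norm_num

lemma eval_above (c t : ℝ) (r : ℕ → ℝ) (m : ℕ) (h : ∀ i ∈ Finset.Icc 1 m, t < r i) :
    Polynomial.eval t (Polynomial.C ((-1:ℝ)^m * c) * ∏ i ∈ Finset.Icc 1 m, (X - Polynomial.C (r i)))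
      = c * ∏ i ∈ Finset.Icc 1 m, (r i - t) := by
  rw [eval_factored, prod_sub_eq, Nat.card_Icc, show m + 1 - 1 = m from by omega]
  linear_combination (c * ∏ i ∈ Finset.Icc 1 m, (r i - t)) * neg_one_sq_pow m

lemma eval_above_pos (c t : ℝ) (r : ℕ → ℝ) (m : ℕ) (h : ∀ i ∈ Finset.Icc 1 m, t < r i)
    (hc : 0 < c) :
    0 < Polynomial.eval t
      (Polynomial.C ((-1:ℝ)^m * c) * ∏ i ∈ Finset.Icc 1 m, (X - Polynomial.C (r i))) := by
  rw [eval_above c t r m h]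
  exact mul_pos hc (prod_sub_pos t r _ h)

lemma prod_split_bot (t : ℝ) (r : ℕ → ℝ) (m : ℕ) :
    ∏ i ∈ Finset.Icc 1 (m+1), (t - r i) = (t - r 1) * ∏ i ∈ Finset.Icc 2 (m+1), (t - r i) := by
  rw [← Finset.Ico_add_one_right_eq_Icc, ← Finset.Ico_add_one_right_eq_Icc,
    Finset.prod_eq_prod_Ico_succ_bot (by omega : 1 < m+1+1)]

lemma eval_one_below_neg (c t : ℝ) (r : ℕ → ℝ) (m : ℕ) (h1 : r 1 < t)
    (h : ∀ i ∈ Finset.Icc 2 (m+1), t < r i) (hc : 0 < c) :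
    Polynomial.eval t (Polynomial.C ((-1:ℝ)^(m+1) * c) *
      ∏ i ∈ Finset.Icc 1 (m+1), (X - Polynomial.C (r i))) < 0 := by
  rw [eval_factored, prod_split_bot, prod_sub_eq t r (Finset.Icc 2 (m+1)), Nat.card_Icc,
    show m + 1 + 1 - 2 = m from by omega]
  have hp : 0 < ∏ i ∈ Finset.Icc 2 (m+1), (r i - t) := prod_sub_pos t r _ h
  have key : (-1:ℝ)^(m+1) * c * ((t - r 1) * ((-1:ℝ)^m * ∏ i ∈ Finset.Icc 2 (m+1), (r i - t)))
      = -(c * (t - r 1) * ∏ i ∈ Finset.Icc 2 (m+1), (r i - t)) := by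
    linear_combination (c * (t - r 1) * ∏ i ∈ Finset.Icc 2 (m+1), (r i - t)) *
      neg_one_pow_succ_mul m
  rw [key]
  have : 0 < c * (t - r 1) * ∏ i ∈ Finset.Icc 2 (m+1), (r i - t) := by
    apply mul_pos (mul_pos hc (by linarith)) hp
  linarith


theorem laguerre_smallest_zeros_order_of_case_two
    (α : ℝ) (hα : -1 < α) (n : ℕ)
    (hnc : ∀ t : ℝ, ¬((laguerre (α + 1) (n + 1)).eval t = 0 ∧ (laguerre α n).eval t = 0))
    (z : ℕ → ℝ)
    (hzpos : ∀ i ∈ Finset.Icc 1 (n + 1), 0 < z i)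
    (hzmono : ∀ i ∈ Finset.Icc 1 (n + 1), ∀ j ∈ Finset.Icc 1 (n + 1), i < j → z i < z j)
    (hzroots : ∀ t : ℝ, (laguerre (α + 1) (n + 1)).eval t = 0 ↔ ∃ i ∈ Finset.Icc 1 (n + 1), z i = t)
    (x : ℕ → ℝ)
    (hxpos : ∀ i ∈ Finset.Icc 1 n, 0 < x i)
    (hxmono : ∀ i ∈ Finset.Icc 1 n, ∀ j ∈ Finset.Icc 1 n, i < j → x i < x j)
    (hxroots : ∀ t : ℝ, (laguerre α n).eval t = 0 ↔ ∃ i ∈ Finset.Icc 1 n, x i = t)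
    (y : ℕ → ℝ)
    (hypos : ∀ i ∈ Finset.Icc 1 (n + 1), 0 < y i)
    (hymono : ∀ i ∈ Finset.Icc 1 (n + 1), ∀ j ∈ Finset.Icc 1 (n + 1), i < j → y i < y j)
    (hyroots : ∀ t : ℝ, (laguerre α (n + 1)).eval t = 0 ↔ ∃ i ∈ Finset.Icc 1 (n + 1), y i = t)
    (hpt : ∃ j ∈ Finset.Icc 1 n, ((n : ℝ) + 1) ∈ Set.Ioo (z j) (z (j + 1))) :
    0 < y 1 ∧ y 1 < x 1 ∧ x 1 < z 1 ∧ z 1 < y 2 := by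
  obtain ⟨j, hj, hjmem⟩ := hpt
  obtain ⟨hj1, hjn⟩ := Finset.mem_Icc.mp hj
  have hn : 1 ≤ n := le_trans hj1 hjn
  have hjlo : z j < (n:ℝ)+1 := hjmem.1
  have hαn : (0:ℝ) < α + n + 1 := by
    have : (0:ℝ) ≤ n := Nat.cast_nonneg n
    linarith
  have h1n : 1 ∈ Finset.Icc 1 n := Finset.mem_Icc.mpr ⟨le_refl 1, hn⟩
  have h1n1 : 1 ∈ Finset.Icc 1 (n+1) := Finset.mem_Icc.mpr ⟨le_rfl, by omega⟩
  have h2n1 : 2 ∈ Finset.Icc 1 (n+1) := Finset.mem_Icc.mpr ⟨by omega, by omega⟩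
  have hn1mem : n+1 ∈ Finset.Icc 1 (n+1) := Finset.mem_Icc.mpr ⟨by omega, le_rfl⟩
  -- coefficients
  have coeff_top : ∀ (β : ℝ) (m : ℕ),
      (laguerre β m).coeff m = (-1:ℝ)^m * (1 / m.factorial) := by
    intro β m
    rw [laguerre_coeff]
    rw [if_pos le_rfl, Finset.Icc_eq_empty (by omega : ¬ (m+1 ≤ m)), Finset.prod_empty,
      Nat.sub_self]
    simp only [Nat.factorial_zero, Nat.cast_one, mul_one, one_mul]
    push_cast
    ring
  have coeff_gt : ∀ (β : ℝ) (m : ℕ), ∀ k, m < k → (laguerre β m).coeff k = 0 := by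
    intro β m k hk
    rw [laguerre_coeff, if_neg (by omega)]
  have coeff_ne : ∀ (β : ℝ) (m : ℕ), (laguerre β m).coeff m ≠ 0 := by
    intro β m
    rw [coeff_top]
    have h2 : (0:ℝ) < 1 / m.factorial := by positivity
    intro h
    rcases mul_eq_zero.mp h with h | h
    · exact pow_ne_zero m (by norm_num : (-1:ℝ) ≠ 0) h
    · linarith
  -- injectivity
  have zinj : ∀ i ∈ Finset.Icc 1 (n+1), ∀ k ∈ Finset.Icc 1 (n+1), z i = z k → i = k := by
    intro i hi k hk he
    by_contra hne
    rcases Nat.lt_or_ge i k with h | h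
    · exact absurd he (ne_of_lt (hzmono i hi k hk h))
    · exact absurd he.symm (ne_of_lt (hzmono k hk i hi (by omega)))
  have xinj : ∀ i ∈ Finset.Icc 1 n, ∀ k ∈ Finset.Icc 1 n, x i = x k → i = k := by
    intro i hi k hk he
    by_contra hne
    rcases Nat.lt_or_ge i k with h | h
    · exact absurd he (ne_of_lt (hxmono i hi k hk h))
    · exact absurd he.symm (ne_of_lt (hxmono k hk i hi (by omega)))
  have yinj : ∀ i ∈ Finset.Icc 1 (n+1), ∀ k ∈ Finset.Icc 1 (n+1), y i = y k → i = k := by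
    intro i hi k hk he
    by_contra hne
    rcases Nat.lt_or_ge i k with h | h
    · exact absurd he (ne_of_lt (hymono i hi k hk h))
    · exact absurd he.symm (ne_of_lt (hymono k hk i hi (by omega)))
  -- factorizations
  have hPfac : laguerre (α+1) (n+1) = Polynomial.C ((-1:ℝ)^(n+1) * (1/(n+1).factorial)) *
      ∏ i ∈ Finset.Icc 1 (n+1), (X - Polynomial.C (z i)) := by
    have := poly_factor (laguerre (α+1) (n+1)) (n+1) z (coeff_ne _ _) (coeff_gt _ _) zinj
      (fun i hi => (hzroots (z i)).mpr ⟨i, hi, rfl⟩)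
    rwa [coeff_top] at this
  have hAfac : laguerre α n = Polynomial.C ((-1:ℝ)^n * (1/n.factorial)) *
      ∏ i ∈ Finset.Icc 1 n, (X - Polynomial.C (x i)) := by
    have := poly_factor (laguerre α n) n x (coeff_ne _ _) (coeff_gt _ _) xinj
      (fun i hi => (hxroots (x i)).mpr ⟨i, hi, rfl⟩)
    rwa [coeff_top] at this
  have hQfac : laguerre α (n+1) = Polynomial.C ((-1:ℝ)^(n+1) * (1/(n+1).factorial)) *
      ∏ i ∈ Finset.Icc 1 (n+1), (X - Polynomial.C (y i)) := by
    have := poly_factor (laguerre α (n+1)) (n+1) y (coeff_ne _ _) (coeff_gt _ _) yinj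
      (fun i hi => (hyroots (y i)).mpr ⟨i, hi, rfl⟩)
    rwa [coeff_top] at this
  -- ordering helpers
  have hordz : ∀ i ∈ Finset.Icc 1 (n+1), z 1 ≤ z i := by
    intro i hi
    rcases Nat.eq_or_lt_of_le (Finset.mem_Icc.mp hi).1 with h | h
    · rw [← h]
    · exact le_of_lt (hzmono 1 h1n1 i hi h)
  have hordx : ∀ i ∈ Finset.Icc 1 n, x 1 ≤ x i := by
    intro i hi
    rcases Nat.eq_or_lt_of_le (Finset.mem_Icc.mp hi).1 with h | h
    · rw [← h]
    · exact le_of_lt (hxmono 1 h1n i hi h)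
  have hordy : ∀ i ∈ Finset.Icc 1 (n+1), y 1 ≤ y i := by
    intro i hi
    rcases Nat.eq_or_lt_of_le (Finset.mem_Icc.mp hi).1 with h | h
    · rw [← h]
    · exact le_of_lt (hymono 1 h1n1 i hi h)
  -- sign facts
  have hSP : ∀ t, t < z 1 → 0 < (laguerre (α+1) (n+1)).eval t := by
    intro t ht
    rw [hPfac]
    exact eval_above_pos _ t z (n+1) (fun i hi => lt_of_lt_of_le ht (hordz i hi)) (by positivity)
  have hSA : ∀ t, t < x 1 → 0 < (laguerre α n).eval t := by
    intro t ht
    rw [hAfac]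
    exact eval_above_pos _ t x n (fun i hi => lt_of_lt_of_le ht (hordx i hi)) (by positivity)
  have hSQ : ∀ t, t < y 1 → 0 < (laguerre α (n+1)).eval t := by
    intro t ht
    rw [hQfac]
    exact eval_above_pos _ t y (n+1) (fun i hi => lt_of_lt_of_le ht (hordy i hi)) (by positivity)
  have hSQneg : ∀ t, y 1 < t → t < y 2 → (laguerre α (n+1)).eval t < 0 := by
    intro t ht1 ht2
    rw [hQfac]
    apply eval_one_below_neg _ t y n ht1 ?_ (by positivity)
    intro i hi
    obtain ⟨hi2, hin⟩ := Finset.mem_Icc.mp hi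
    have hi' : i ∈ Finset.Icc 1 (n+1) := Finset.mem_Icc.mpr ⟨by omega, hin⟩
    rcases Nat.eq_or_lt_of_le hi2 with h | h
    · rw [← h]; exact ht2
    · exact lt_trans ht2 (hymono 2 h2n1 i hi' h)
  -- evaluated identities
  have hI4 : ∀ t : ℝ, t * (laguerre (α+1) (n+1)).eval t =
      (α+n+1) * (laguerre α n).eval t + (t - ((n:ℝ)+1)) * (laguerre α (n+1)).eval t := by
    intro t
    have h := congrArg (Polynomial.eval t) (laguerre_identity α n)
    simpa using h
  have hDer : ∀ t : ℝ, (derivative (laguerre α (n+1))).eval t =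
      (laguerre α (n+1)).eval t - (laguerre (α+1) (n+1)).eval t := by
    intro t
    rw [laguerre_derivative]
    simp
  have hQeval0 : ∀ i ∈ Finset.Icc 1 (n+1), (laguerre α (n+1)).eval (y i) = 0 :=
    fun i hi => (hyroots _).mpr ⟨i, hi, rfl⟩
  -- sign of P at y (n+1)
  have hQdersign : 0 < (-1:ℝ)^(n+1) * (derivative (laguerre α (n+1))).eval (y (n+1)) := by
    have hsplit : ∏ i ∈ Finset.Icc 1 (n+1), (X - Polynomial.C (y i)) =
        (∏ i ∈ Finset.Icc 1 n, (X - Polynomial.C (y i))) * (X - Polynomial.C (y (n+1))) :=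
      Finset.prod_Icc_succ_top (by omega) _
    have hder : derivative (laguerre α (n+1)) =
        derivative (Polynomial.C ((-1:ℝ)^(n+1) * (1/(n+1).factorial)) *
          ∏ i ∈ Finset.Icc 1 n, (X - Polynomial.C (y i))) * (X - Polynomial.C (y (n+1)))
        + (Polynomial.C ((-1:ℝ)^(n+1) * (1/(n+1).factorial)) *
          ∏ i ∈ Finset.Icc 1 n, (X - Polynomial.C (y i))) * derivative (X - Polynomial.C (y (n+1))) := by
      rw [hQfac, hsplit, ← mul_assoc, Polynomial.derivative_mul]
    rw [hder]
    have hXd : derivative (X - Polynomial.C (y (n+1))) = 1 := by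
      rw [Polynomial.derivative_sub, Polynomial.derivative_X, Polynomial.derivative_C, sub_zero]
    rw [hXd]
    simp only [Polynomial.eval_add, Polynomial.eval_mul, Polynomial.eval_sub, Polynomial.eval_X,
      Polynomial.eval_C, Polynomial.eval_one, Polynomial.eval_prod, sub_self, mul_zero, zero_add,
      mul_one]
    have hp : 0 < ∏ i ∈ Finset.Icc 1 n, (y (n+1) - y i) := by
      apply Finset.prod_pos
      intro i hi
      obtain ⟨hi1, hin⟩ := Finset.mem_Icc.mp hi
      have : y i < y (n+1) :=
        hymono i (Finset.mem_Icc.mpr ⟨hi1, by omega⟩) (n+1) hn1mem (by omega)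
      linarith
    have hkey : (-1:ℝ)^(n+1) * ((-1:ℝ)^(n+1) * (1/(n+1).factorial) *
        ∏ i ∈ Finset.Icc 1 n, (y (n+1) - y i)) =
        (1/(n+1).factorial) * ∏ i ∈ Finset.Icc 1 n, (y (n+1) - y i) := by
      linear_combination ((1/((n+1).factorial:ℝ)) * ∏ i ∈ Finset.Icc 1 n, (y (n+1) - y i)) *
        neg_one_sq_pow (n+1)
    rw [hkey]
    positivity
  have hPe : (laguerre (α+1) (n+1)).eval (y (n+1)) =
      - (derivative (laguerre α (n+1))).eval (y (n+1)) := by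
    have h := hDer (y (n+1))
    rw [hQeval0 (n+1) hn1mem] at h
    linarith
  have hPytop : 0 < (-1:ℝ)^n * (laguerre (α+1) (n+1)).eval (y (n+1)) := by
    rw [hPe]
    have hre : (-1:ℝ)^n * -((derivative (laguerre α (n+1))).eval (y (n+1))) =
        (-1:ℝ)^(n+1) * (derivative (laguerre α (n+1))).eval (y (n+1)) := by
      rw [pow_succ]; ring
    rw [hre]
    exact hQdersign
  -- y (n+1) < z (n+1)
  have hyz_top : y (n+1) < z (n+1) := by
    by_contra hle
    push_neg at hle
    rcases eq_or_lt_of_le hle with heq | hlt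
    · have h0 : (laguerre (α+1) (n+1)).eval (y (n+1)) = 0 :=
        (hzroots _).mpr ⟨n+1, hn1mem, heq⟩
      rw [h0, mul_zero] at hPytop
      exact lt_irrefl 0 hPytop
    · have hall : ∀ i ∈ Finset.Icc 1 (n+1), z i < y (n+1) := by
        intro i hi
        rcases Nat.eq_or_lt_of_le (Finset.mem_Icc.mp hi).2 with h | h
        · rw [h]; exact hlt
        · exact lt_trans (hzmono i hi (n+1) hn1mem (by omega)) hlt
      have hp : 0 < ∏ i ∈ Finset.Icc 1 (n+1), (y (n+1) - z i) := by
        apply Finset.prod_pos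
        intro i hi
        have := hall i hi
        linarith
      have he : (laguerre (α+1) (n+1)).eval (y (n+1)) =
          (-1:ℝ)^(n+1) * ((1/(n+1).factorial) * ∏ i ∈ Finset.Icc 1 (n+1), (y (n+1) - z i)) := by
        rw [hPfac, eval_factored]
        ring
      rw [he] at hPytop
      have hkey : (-1:ℝ)^n * ((-1:ℝ)^(n+1) *
          ((1/(n+1).factorial) * ∏ i ∈ Finset.Icc 1 (n+1), (y (n+1) - z i))) =
          -((1/(n+1).factorial) * ∏ i ∈ Finset.Icc 1 (n+1), (y (n+1) - z i)) := by
        linear_combination ((1/((n+1).factorial:ℝ)) *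
          ∏ i ∈ Finset.Icc 1 (n+1), (y (n+1) - z i)) * neg_one_pow_succ_mul n
      rw [hkey] at hPytop
      have hpos : 0 < (1/((n+1).factorial:ℝ)) * ∏ i ∈ Finset.Icc 1 (n+1), (y (n+1) - z i) := by
        positivity
      linarith
  -- Rolle: a zero of P in each (y k, y (k+1))
  have key : ∀ k ∈ Finset.Icc 1 n, ∃ i ∈ Finset.Icc 1 (n+1), y k < z i ∧ z i < y (k+1) := by
    intro k hk
    obtain ⟨hk1, hkn⟩ := Finset.mem_Icc.mp hk
    have hkmem : k ∈ Finset.Icc 1 (n+1) := Finset.mem_Icc.mpr ⟨hk1, by omega⟩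
    have hk1mem : k+1 ∈ Finset.Icc 1 (n+1) := Finset.mem_Icc.mpr ⟨by omega, by omega⟩
    have hlt : y k < y (k+1) := hymono k hkmem (k+1) hk1mem (by omega)
    have hcont : ContinuousOn (fun t : ℝ => Real.exp (-t) * (laguerre α (n+1)).eval t)
        (Set.Icc (y k) (y (k+1))) :=
      ((Real.continuous_exp.comp continuous_neg).mul (laguerre α (n+1)).continuous).continuousOn
    have hends : (fun t : ℝ => Real.exp (-t) * (laguerre α (n+1)).eval t) (y k) =
        (fun t : ℝ => Real.exp (-t) * (laguerre α (n+1)).eval t) (y (k+1)) := by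
      show Real.exp (-(y k)) * _ = Real.exp (-(y (k+1))) * _
      rw [hQeval0 k hkmem, hQeval0 (k+1) hk1mem, mul_zero, mul_zero]
    have hd : ∀ t ∈ Set.Ioo (y k) (y (k+1)),
        HasDerivAt (fun t : ℝ => Real.exp (-t) * (laguerre α (n+1)).eval t)
          ((fun t : ℝ => Real.exp (-t) * (-(laguerre (α+1) (n+1)).eval t)) t) t := by
      intro t _
      have h1 : HasDerivAt (fun s : ℝ => Real.exp (-s)) (Real.exp (-t) * (-1)) t :=
        HasDerivAt.comp t (Real.hasDerivAt_exp (-t)) (hasDerivAt_neg t)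
      have h2 : HasDerivAt (fun s : ℝ => (laguerre α (n+1)).eval s)
          ((derivative (laguerre α (n+1))).eval t) t := (laguerre α (n+1)).hasDerivAt t
      have h3 := h1.mul h2
      refine h3.congr_deriv ?_
      rw [hDer t]
      ring
    obtain ⟨c, hc, hc0⟩ := exists_hasDerivAt_eq_zero hlt hcont hends hd
    have hPc : (laguerre (α+1) (n+1)).eval c = 0 := by
      have hexp : Real.exp (-c) ≠ 0 := Real.exp_ne_zero _
      rcases mul_eq_zero.mp hc0 with h | h
      · exact absurd h hexp
      · linarith
    obtain ⟨i, hi, hiz⟩ := (hzroots c).mp hPc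
    exact ⟨i, hi, by rw [hiz]; exact hc.1, by rw [hiz]; exact hc.2⟩
  choose! I hImem hIlo hIhi using key
  -- index comparison
  have zlt_index : ∀ i ∈ Finset.Icc 1 (n+1), ∀ k ∈ Finset.Icc 1 (n+1), z i < z k → i < k := by
    intro i hi k hk h
    by_contra hle
    push_neg at hle
    rcases Nat.eq_or_lt_of_le hle with heq | hlt
    · rw [heq] at h; exact lt_irrefl _ h
    · exact absurd (hzmono k hk i hi hlt) (by linarith)
  have hImono : ∀ k, 1 ≤ k → k < n → I k < I (k+1) := by
    intro k h1 h2
    have hk : k ∈ Finset.Icc 1 n := Finset.mem_Icc.mpr ⟨h1, by omega⟩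
    have hk1 : k+1 ∈ Finset.Icc 1 n := Finset.mem_Icc.mpr ⟨by omega, by omega⟩
    have ha := hIhi k hk
    have hb := hIlo (k+1) hk1
    exact zlt_index _ (hImem k hk) _ (hImem (k+1) hk1) (by linarith)
  have hIn : I n ≤ n := by
    have hnn : n ∈ Finset.Icc 1 n := Finset.mem_Icc.mpr ⟨hn, le_rfl⟩
    have h1 : z (I n) < y (n+1) := hIhi n hnn
    have h2 : z (I n) < z (n+1) := lt_trans h1 hyz_top
    have := zlt_index _ (hImem n hnn) _ hn1mem h2
    omega
  have hIle : ∀ d k, 1 ≤ k → k + d = n → I k ≤ k := by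
    intro d
    induction d with
    | zero =>
      intro k hk1 hkd
      have hkn : k = n := by omega
      subst hkn
      exact hIn
    | succ d ih =>
      intro k hk1 hkd
      have h2 : I (k+1) ≤ k+1 := ih (k+1) (by omega) (by omega)
      have h3 : I k < I (k+1) := hImono k hk1 (by omega)
      omega
  have hI1 : I 1 = 1 := by
    have hmem := Finset.mem_Icc.mp (hImem 1 h1n)
    have := hIle (n-1) 1 le_rfl (by omega)
    omega
  have hyz1 : y 1 < z 1 ∧ z 1 < y 2 := by
    have h1 := hIlo 1 h1n
    have h2 := hIhi 1 h1n
    rw [hI1] at h1 h2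
    exact ⟨h1, by simpa using h2⟩
  -- final chain
  have hjmem1 : j ∈ Finset.Icc 1 (n+1) := Finset.mem_Icc.mpr ⟨hj1, by omega⟩
  have hz1n : z 1 < (n:ℝ)+1 := by
    have hle : z 1 ≤ z j := by
      rcases Nat.eq_or_lt_of_le hj1 with h | h
      · rw [← h]
      · exact le_of_lt (hzmono 1 h1n1 j hjmem1 h)
    linarith
  have hQz1 : (laguerre α (n+1)).eval (z 1) < 0 := hSQneg (z 1) hyz1.1 hyz1.2
  have hPz1 : (laguerre (α+1) (n+1)).eval (z 1) = 0 := (hzroots _).mpr ⟨1, h1n1, rfl⟩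
  have hAz1 : (laguerre α n).eval (z 1) < 0 := by
    have hid := hI4 (z 1)
    rw [hPz1, mul_zero] at hid
    have h5 : (α+n+1) * (laguerre α n).eval (z 1) =
        (((n:ℝ)+1) - z 1) * (laguerre α (n+1)).eval (z 1) := by linarith
    have h6 : (((n:ℝ)+1) - z 1) * (laguerre α (n+1)).eval (z 1) < 0 :=
      mul_neg_of_pos_of_neg (by linarith) hQz1
    nlinarith
  have hx1z1 : x 1 < z 1 := by
    rcases lt_trichotomy (z 1) (x 1) with h | h | h
    · exfalso; have := hSA (z 1) h; linarith
    · exfalso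
      have h0 : (laguerre α n).eval (z 1) = 0 := (hxroots _).mpr ⟨1, h1n, h.symm⟩
      linarith
    · exact h
  have hy1x1 : y 1 < x 1 := by
    rcases lt_trichotomy (x 1) (y 1) with h | h | h
    · exfalso
      have hQx : 0 < (laguerre α (n+1)).eval (x 1) := hSQ _ h
      have hPx : 0 < (laguerre (α+1) (n+1)).eval (x 1) := hSP _ (by linarith [hyz1.1])
      have hAx : (laguerre α n).eval (x 1) = 0 := (hxroots _).mpr ⟨1, h1n, rfl⟩
      have hid := hI4 (x 1)
      rw [hAx, mul_zero, zero_add] at hid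
      have hx1pos := hxpos 1 h1n
      have hx1n : x 1 < (n:ℝ)+1 := by linarith [hyz1.1]
      nlinarith
    · exfalso
      have hAx : (laguerre α n).eval (x 1) = 0 := (hxroots _).mpr ⟨1, h1n, rfl⟩
      have hQx : (laguerre α (n+1)).eval (x 1) = 0 := (hyroots _).mpr ⟨1, h1n1, h.symm⟩
      have hid := hI4 (x 1)
      rw [hAx, hQx] at hid
      simp only [mul_zero, add_zero, zero_add] at hid
      have hx1pos := hxpos 1 h1n
      have hPx : (laguerre (α+1) (n+1)).eval (x 1) = 0 := by
        rcases mul_eq_zero.mp hid with h' | h'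
        · exact absurd h' (ne_of_gt hx1pos)
        · exact h'
      exact hnc (x 1) ⟨hPx, hAx⟩
    · exact h
  exact ⟨hypos 1 h1n1, hy1x1, hx1z1, hyz1.2⟩
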